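/- Let A be a discrete valuation ring with uniformizer π, residue field κ of characteristic ≠ 2, and fraction field K with -1 a square in K. For units a₁, …, a_i ∈ A* and 0 ≤ m ≤ i, the residue of the Milnor symbol {πa₁, …, πa_m, a_{m+1}, …, a_i} mod 2 under the tame symbol/residue map ∂_A : K^M_i(K)/2 → K^M_{i-1}(κ)/2 equals (Σ_{j=1}^m {ā₁, …, \hat{ā_j}, …, ā_m}) · {ā_{m+1}, …, ā_i}, with the conventions that the sum is 1 (the empty symbol) if m = 1 and 0 if m = 0. -/

import Mathlib

open IsLocalRing

private theorem eraseIdx_map' {α β : Type*} (f : α → β) :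
    ∀ (L : List α) (n : ℕ), (L.map f).eraseIdx n = (L.eraseIdx n).map f := by
  intro L
  induction L with
  | nil => intro n; simp
  | cons a L ih =>
    intro n
    cases n with
    | zero => simp
    | succ n => simp [ih]

/-- **Residue formula for mod-2 Milnor symbols (Lemma 6 of the paper).**
Let `A` be a discrete valuation ring with uniformizer `π`, residue field `κ` of
characteristic `≠ 2`, and fraction field `K` in which `-1` is a square.  We axiomatize the
mod-2 Milnor K-rings of `K` and `κ` (as commutative rings `MK`, `Mκ` of exponent `2`, with
symbols given on lists of units, multiplicative under concatenation and additive in each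
slot, satisfying `{a, -a} = 0`) and the residue (tame symbol) map `∂ : MK →+ Mκ`
(sending `{π, u₂, …}` to `{ū₂, …}` and symbols of units to `0`).  Then for units
`a₁, …, a_m, b₁, …, b_l ∈ A*`,
`∂ {π a₁, …, π a_m, b₁, …, b_l} = (∑_{j=1}^m {ā₁, …, \hat{ā_j}, …, ā_m}) ⬝ {b̄₁, …, b̄_l}`,
with the conventions that the sum is the empty symbol (the identity) if `m = 1` and `0` if
`m = 0`. -/
theorem residue_of_milnor_symbol
    (A : Type*) [CommRing A] [IsDomain A] [IsDiscreteValuationRing A]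
    (hκ : ringChar (ResidueField A) ≠ 2)
    (hK : IsSquare (-1 : FractionRing A))
    (π : A) (hπ : Irreducible π)
    (MK Mκ : Type*) [CommRing MK] [CommRing Mκ]
    (symbK : List (FractionRing A)ˣ → MK)
    (symbκ : List (ResidueField A)ˣ → Mκ)
    (hnilK : symbK [] = 1) (hnilκ : symbκ [] = 1)
    (happK : ∀ L₁ L₂, symbK (L₁ ++ L₂) = symbK L₁ * symbK L₂)
    (happκ : ∀ L₁ L₂, symbκ (L₁ ++ L₂) = symbκ L₁ * symbκ L₂)
    (htwoK : ∀ x : MK, x + x = 0) (htwoκ : ∀ x : Mκ, x + x = 0)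
    (haddK : ∀ a b : (FractionRing A)ˣ, symbK [a * b] = symbK [a] + symbK [b])
    (haddκ : ∀ a b : (ResidueField A)ˣ, symbκ [a * b] = symbκ [a] + symbκ [b])
    (hselfK : ∀ a : (FractionRing A)ˣ, symbK [a, -a] = 0)
    (uK : Aˣ →* (FractionRing A)ˣ)
    (huK : ∀ u : Aˣ, (uK u : FractionRing A) = algebraMap A (FractionRing A) u)
    (uκ : Aˣ →* (ResidueField A)ˣ)
    (huκ : ∀ u : Aˣ, (uκ u : ResidueField A) = residue A u)
    (πK : (FractionRing A)ˣ)
    (hπK : (πK : FractionRing A) = algebraMap A (FractionRing A) π)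
    (res : MK →+ Mκ)
    (hres₁ : ∀ L : List Aˣ, res (symbK (πK :: L.map uK)) = symbκ (L.map uκ))
    (hres₂ : ∀ L : List Aˣ, res (symbK (L.map uK)) = 0) :
    ∀ (m l : ℕ) (a : Fin m → Aˣ) (b : Fin l → Aˣ),
      res (symbK (List.ofFn (fun j => πK * uK (a j)) ++ List.ofFn (fun j => uK (b j)))) =
      (∑ j : Fin m, symbκ ((List.ofFn fun j' => uκ (a j')).eraseIdx j)) *
        symbκ (List.ofFn fun j => uκ (b j)) := by
  classical
  -- cons lemma
  have hconsK : ∀ (c : (FractionRing A)ˣ) (L : List (FractionRing A)ˣ),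
      symbK (c :: L) = symbK [c] * symbK L := by
    intro c L; simpa using happK [c] L
  -- {-1} = 0
  obtain ⟨s, hs⟩ := hK
  have hs0 : s ≠ 0 := by
    intro h; rw [h, mul_zero] at hs
    exact (neg_ne_zero.mpr (one_ne_zero : (1 : FractionRing A) ≠ 0)) hs
  set su : (FractionRing A)ˣ := Units.mk0 s hs0 with hsu
  have hneg1 : (-1 : (FractionRing A)ˣ) = su * su := by
    ext; simpa [hsu] using hs
  have hm1 : symbK [(-1 : (FractionRing A)ˣ)] = 0 := by
    rw [hneg1, haddK]; exact htwoK _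
  -- {π, π} = 0
  have hp2 : symbK [πK] * symbK [πK] = 0 := by
    have h := hselfK πK
    rw [show (πK :: [-πK]) = [πK] ++ [-πK] from rfl, happK] at h
    have hneg : (-πK) = (-1 : (FractionRing A)ˣ) * πK := by ext; simp
    rwa [hneg, haddK, hm1, zero_add] at h
  -- expansion of the product of (π aⱼ) symbols
  have key : ∀ M : List Aˣ, symbK (M.map (fun a => πK * uK a)) =
      symbK (M.map uK) +
        symbK [πK] * ∑ j ∈ Finset.range M.length, symbK ((M.map uK).eraseIdx j) := by
    intro M
    induction M with
    | nil =>
        simp only [List.map_nil, List.length_nil, Finset.range_zero,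
          Finset.sum_empty, mul_zero, add_zero]
    | cons a M ih =>
      have hsum : (∑ j ∈ Finset.range M.length,
          symbK ((uK a :: M.map uK).eraseIdx (j + 1))) =
          ∑ j ∈ Finset.range M.length,
            symbK [uK a] * symbK ((M.map uK).eraseIdx j) :=
        Finset.sum_congr rfl fun j _ => by
          rw [List.eraseIdx_cons_succ, hconsK (uK a) ((M.map uK).eraseIdx j)]
      rw [List.map_cons, List.map_cons,
        hconsK (πK * uK a) (M.map fun a => πK * uK a), haddK, ih,
        hconsK (uK a) (M.map uK),
        List.length_cons, Finset.sum_range_succ', List.eraseIdx_cons_zero, hsum,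
        ← Finset.mul_sum]
      linear_combination (∑ j ∈ Finset.range M.length, symbK ((M.map uK).eraseIdx j)) * hp2
  intro m l a b
  have e1 : List.ofFn (fun j => πK * uK (a j)) =
      (List.ofFn a).map (fun x => πK * uK x) := by rw [List.map_ofFn]; rfl
  have e2 : List.ofFn (fun j => uK (b j)) = (List.ofFn b).map uK := by
    rw [List.map_ofFn]; rfl
  have e3 : (List.ofFn fun j' => uκ (a j')) = (List.ofFn a).map uκ := by
    rw [List.map_ofFn]; rfl
  have e4 : (List.ofFn fun j => uκ (b j)) = (List.ofFn b).map uκ := by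
    rw [List.map_ofFn]; rfl
  rw [e1, e2, e3, e4, happK, key, add_mul, map_add, ← happK, ← List.map_append, hres₂,
    zero_add, mul_assoc, Finset.sum_mul, Finset.mul_sum, map_sum,
    List.length_ofFn, ← Fin.sum_univ_eq_sum_range]
  rw [Finset.sum_mul]
  refine Finset.sum_congr rfl fun j _ => ?_
  rw [← happK, eraseIdx_map' uK, ← List.map_append, ← hconsK, hres₁,
    List.map_append, happκ, eraseIdx_map' uκ]
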